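/- With probability one, if n ≥ p+1 and Y^{(1)},…,Y^{(n)} are i.i.d. from a p-dimensional multivariate normal distribution with positive definite covariance, the sample covariance matrix S = (1/n) Σ_k (Y^{(k)} - Ȳ)(Y^{(k)} - Ȳ)' is positive definite. -/

import Mathlib

open Matrix MeasureTheory ProbabilityTheory

variable {q m : ℕ}

/-- Linear independence of `m` vectors in `ℝ^q` iff the Gram determinant is nonzero. -/
lemma linIndep_iff_gram_det (z : Fin m → (Fin q → ℝ)) :
    LinearIndependent ℝ z ↔
      ((Matrix.of fun i k => z k i)ᵀ * (Matrix.of fun i k => z k i)).det ≠ 0 := by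
  set A : Matrix (Fin q) (Fin m) ℝ := Matrix.of fun i k => z k i with hA
  have hAv : ∀ v : Fin m → ℝ, A *ᵥ v = ∑ k, v k • z k := by
    intro v
    funext i
    simp [hA, mulVec, dotProduct, Finset.sum_apply, mul_comm]
  have hker : ∀ v : Fin m → ℝ, (Aᵀ * A) *ᵥ v = 0 ↔ A *ᵥ v = 0 := by
    intro v
    have := congrArg (fun K => v ∈ K) (Matrix.ker_mulVecLin_transpose_mul_self A)
    simpa [LinearMap.mem_ker, Matrix.mulVecLin_apply, ← Matrix.mulVec_mulVec, Matrix.mulVec_transpose] using this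
  constructor
  · intro h hdet
    obtain ⟨v, hv, hv0⟩ := Matrix.exists_mulVec_eq_zero_iff.2 hdet
    have : A *ᵥ v = 0 := (hker v).1 hv0
    rw [hAv] at this
    exact hv (funext fun k => Fintype.linearIndependent_iff.1 h v this k)
  · intro hdet
    rw [Fintype.linearIndependent_iff]
    intro g hg i
    by_contra hgi
    exact hdet (Matrix.exists_mulVec_eq_zero_iff.1
      ⟨g, fun h0 => hgi (by rw [h0]; rfl), (hker g).2 (by rw [hAv]; exact hg)⟩)

variable {π : ℕ}

/-- The set of tuples whose `1`-lifted vectors are linearly dependent is measurable. -/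
lemma measurableSet_badSet :
    MeasurableSet {y : Fin m → (Fin π → ℝ) |
      ¬ LinearIndependent ℝ (fun k => (Fin.cons 1 (y k) : Fin (π + 1) → ℝ))} := by
  have hA : Continuous fun y : Fin m → (Fin π → ℝ) =>
      (Matrix.of fun i k => (Fin.cons 1 (y k) : Fin (π + 1) → ℝ) i) := by
    apply continuous_matrix
    intro i k
    refine Fin.cases ?_ ?_ i
    · simpa using continuous_const
    · intro j
      simpa [Function.comp_def] using (continuous_apply j).comp (continuous_apply k)
  have hdet : Continuous fun y : Fin m → (Fin π → ℝ) =>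
      ((Matrix.of fun i k => (Fin.cons 1 (y k) : Fin (π + 1) → ℝ) i)ᵀ *
        (Matrix.of fun i k => (Fin.cons 1 (y k) : Fin (π + 1) → ℝ) i)).det :=
    (hA.matrix_transpose.matrix_mul hA).matrix_det
  have : {y : Fin m → (Fin π → ℝ) |
      ¬ LinearIndependent ℝ (fun k => (Fin.cons 1 (y k) : Fin (π + 1) → ℝ))} =
      (fun y : Fin m → (Fin π → ℝ) =>
        ((Matrix.of fun i k => (Fin.cons 1 (y k) : Fin (π + 1) → ℝ) i)ᵀ *
          (Matrix.of fun i k => (Fin.cons 1 (y k) : Fin (π + 1) → ℝ) i)).det) ⁻¹' {0} := by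
    ext y
    simp [linIndep_iff_gram_det]
  rw [this]
  exact hdet.measurable (measurableSet_singleton 0)

/-- The linear map `v ↦ (0, v) : ℝ^π → ℝ^(π+1)`. -/
noncomputable def consZeroLM : (Fin π → ℝ) →ₗ[ℝ] (Fin (π + 1) → ℝ) where
  toFun v := Fin.cons 0 v
  map_add' v w := by
    funext i
    refine Fin.cases ?_ ?_ i <;> simp
  map_smul' c v := by
    funext i
    refine Fin.cases ?_ ?_ i <;> simp

/-- The affine map `v ↦ (1, v) : ℝ^π → ℝ^(π+1)`. -/
noncomputable def consOneAM : (Fin π → ℝ) →ᵃ[ℝ] (Fin (π + 1) → ℝ) where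
  toFun v := Fin.cons 1 v
  linear := consZeroLM
  map_vadd' v w := by
    funext i
    refine Fin.cases ?_ ?_ i <;> simp [consZeroLM]

lemma volume_cons_one_mem_eq_zero (W : Submodule ℝ (Fin (π + 1) → ℝ)) (hW : W ≠ ⊤) :
    volume {v : Fin π → ℝ | (Fin.cons 1 v : Fin (π + 1) → ℝ) ∈ W} = 0 := by
  have hsub : {v : Fin π → ℝ | (Fin.cons 1 v : Fin (π + 1) → ℝ) ∈ W} =
      ↑(AffineSubspace.comap (consOneAM (π := π)) W.toAffineSubspace) := rfl
  rw [hsub]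
  apply Measure.addHaar_affineSubspace
  intro htop
  apply hW
  have hall : ∀ v : Fin π → ℝ, (Fin.cons 1 v : Fin (π + 1) → ℝ) ∈ W := by
    intro v
    have : v ∈ AffineSubspace.comap (consOneAM (π := π)) W.toAffineSubspace := by
      rw [htop]; trivial
    exact this
  rw [Submodule.eq_top_iff']
  intro x
  have h0 : (Fin.cons 1 0 : Fin (π + 1) → ℝ) ∈ W := hall 0
  have hc : ∀ w : Fin π → ℝ, (Fin.cons 0 w : Fin (π + 1) → ℝ) ∈ W := by
    intro w
    have := W.sub_mem (hall w) h0
    convert this using 1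
    funext i
    refine Fin.cases ?_ ?_ i <;> simp
  have hx : x = x 0 • (Fin.cons 1 0 : Fin (π + 1) → ℝ) + Fin.cons 0 (Fin.tail x) := by
    funext i
    refine Fin.cases ?_ ?_ i <;> simp [Fin.tail]
  rw [hx]
  exact W.add_mem (W.smul_mem _ h0) (hc _)

open Fin in
lemma key_null : ∀ m, m ≤ π + 1 → ∀ (μ : Fin m → Measure (Fin π → ℝ)),
    (∀ i, IsProbabilityMeasure (μ i)) → (∀ i, μ i ≪ volume) →
    Measure.pi μ {y : Fin m → (Fin π → ℝ) |
      ¬ LinearIndependent ℝ (fun k => (Fin.cons 1 (y k) : Fin (π + 1) → ℝ))} = 0 := by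
  intro m
  induction m with
  | zero =>
    intro _ μ hprob hac
    convert measure_empty (μ := Measure.pi μ)
    rw [Set.eq_empty_iff_forall_notMem]
    intro y hy
    exact hy (linearIndependent_empty_type)
  | succ m ih =>
    intro hm μ hprob hac
    haveI := hprob
    haveI : ∀ i, SigmaFinite (μ i) := fun i => inferInstance
    set V := Fin π → ℝ
    set B : Set (Fin (m + 1) → V) := {y | ¬ LinearIndependent ℝ
      (fun k => (Fin.cons 1 (y k) : Fin (π + 1) → ℝ))} with hBdef
    have hB : MeasurableSet B := measurableSet_badSet
    set e := MeasurableEquiv.piFinSuccAbove (fun _ : Fin (m + 1) => V) 0 with he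
    have mp := (measurePreserving_piFinSuccAbove μ 0).symm
    rw [← mp.measure_preimage hB.nullMeasurableSet]
    have hsymm : ∀ v (w : Fin m → V), e.symm (v, w) = Fin.cons v w := by
      intro v w
      simp [he, MeasurableEquiv.piFinSuccAbove_symm_apply, Fin.insertNth_zero']
      rfl
    rw [Measure.prod_apply_symm (e.symm.measurable hB)]
    have hrest : Measure.pi (fun j => μ ((0 : Fin (m+1)).succAbove j))
        {w : Fin m → V | ¬ LinearIndependent ℝ
          (fun k => (Fin.cons 1 (w k) : Fin (π + 1) → ℝ))} = 0 :=
      ih (le_trans (Nat.le_succ m) hm) _ (fun i => hprob _) (fun i => hac _)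
    rw [← lintegral_zero (μ := Measure.pi (fun j => μ ((0 : Fin (m+1)).succAbove j)))]
    apply lintegral_congr_ae
    rw [Filter.EventuallyEq, ae_iff]
    apply measure_mono_null _ hrest
    intro w hw
    change ¬ _ at hw
    change ¬ _
    intro hlin
    apply hw
    set W := Submodule.span ℝ (Set.range fun j => (Fin.cons 1 (w j) : Fin (π + 1) → ℝ)) with hW
    have hWne : W ≠ ⊤ := by
      intro htop
      have h1 : Module.finrank ℝ W ≤ m := by
        refine le_trans (finrank_span_le_card _) ?_
        rw [Set.toFinset_range]
        exact le_trans (Finset.card_image_le) (by simp)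
      rw [htop, finrank_top, Module.finrank_fin_fun] at h1
      omega
    have hslice : {v : V | (v, w) ∈ e.symm ⁻¹' B} ⊆
        {v : V | (Fin.cons 1 v : Fin (π + 1) → ℝ) ∈ W} := by
      intro v hv
      simp only [Set.mem_preimage, Set.mem_setOf_eq, hsymm, hBdef] at hv
      have hcons : (fun k => (Fin.cons 1 ((Fin.cons v w : Fin (m+1) → V) k) : Fin (π + 1) → ℝ)) =
          Fin.cons (Fin.cons 1 v) (fun j => (Fin.cons 1 (w j) : Fin (π + 1) → ℝ)) := by
        funext k
        refine Fin.cases ?_ ?_ k <;> simp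
      rw [hcons, linearIndependent_fin_cons] at hv
      push_neg at hv
      exact hv hlin
    refine measure_mono_null hslice ((hac 0) (volume_cons_one_mem_eq_zero W hWne))

lemma posdef_of_linIndep {p n : ℕ} (hn : p + 1 ≤ n) (yv : Fin n → (Fin p → ℝ))
    (h : LinearIndependent ℝ
      (fun k : Fin (p + 1) => (Fin.cons 1 (yv (Fin.castLE hn k)) : Fin (p + 1) → ℝ))) :
    (Matrix.of fun i j : Fin p =>
        (n : ℝ)⁻¹ * ∑ k : Fin n,
          (yv k i - ((n : ℝ)⁻¹ • ∑ m : Fin n, yv m) i) *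
          (yv k j - ((n : ℝ)⁻¹ • ∑ m : Fin n, yv m) j)).PosDef := by
  have hnpos : (0 : ℝ) < (n : ℝ)⁻¹ := by
    have : 0 < n := lt_of_lt_of_le (Nat.succ_pos p) hn
    positivity
  set ybar : Fin p → ℝ := (n : ℝ)⁻¹ • ∑ m : Fin n, yv m with hybar
  set D : Matrix (Fin n) (Fin p) ℝ := Matrix.of fun k i => yv k i - ybar i with hD
  set M : Matrix (Fin p) (Fin p) ℝ := Matrix.of fun i j : Fin p =>
        (n : ℝ)⁻¹ * ∑ k : Fin n, (yv k i - ybar i) * (yv k j - ybar j) with hM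
  have hMD : M = (n : ℝ)⁻¹ • (Dᵀ * D) := by
    ext i j
    simp [hM, hD, Matrix.mul_apply]
  rw [Matrix.posDef_iff_dotProduct_mulVec]
  constructor
  · show Mᴴ = M
    ext i j
    simp only [hM, Matrix.conjTranspose_apply, Matrix.of_apply, star_trivial]
    congr 1
    exact Finset.sum_congr rfl fun k _ => mul_comm _ _
  · intro x hx
    have hQ : star x ⬝ᵥ M *ᵥ x = (n : ℝ)⁻¹ * ((D *ᵥ x) ⬝ᵥ (D *ᵥ x)) := by
      rw [star_trivial, hMD, Matrix.smul_mulVec, dotProduct_smul,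
        ← Matrix.mulVec_mulVec, Matrix.dotProduct_mulVec, Matrix.vecMul_transpose]
      rfl
    rw [hQ]
    apply mul_pos hnpos
    have hvnn : (0 : ℝ) ≤ (D *ᵥ x) ⬝ᵥ (D *ᵥ x) :=
      Finset.sum_nonneg fun k _ => mul_self_nonneg _
    rcases hvnn.lt_or_eq with hlt | heq
    · exact hlt
    exfalso
    have hv0 : D *ᵥ x = 0 := dotProduct_self_eq_zero.1 heq.symm
    -- each sample has the same dot product with x
    have hdot : ∀ k : Fin n, yv k ⬝ᵥ x = ybar ⬝ᵥ x := by
      intro k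
      have := congrFun hv0 k
      simp only [Matrix.mulVec, dotProduct, hD, Matrix.of_apply, Pi.zero_apply] at this
      have : ∑ i, yv k i * x i - ∑ i, ybar i * x i = 0 := by
        rw [← Finset.sum_sub_distrib]
        simpa [sub_mul] using this
      have := sub_eq_zero.1 this
      simpa [dotProduct] using this
    set u : Fin (p + 1) → ℝ := Fin.cons (-(ybar ⬝ᵥ x)) x with hu
    have hud : ∀ k : Fin (p + 1),
        u ⬝ᵥ (Fin.cons 1 (yv (Fin.castLE hn k)) : Fin (p + 1) → ℝ) = 0 := by
      intro k
      have hk := hdot (Fin.castLE hn k)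
      simp only [dotProduct] at hk ⊢
      rw [Fin.sum_univ_succ]
      simp only [hu, Fin.cons_zero, Fin.cons_succ]
      rw [Finset.sum_congr rfl fun i _ => mul_comm (x i) (yv (Fin.castLE hn k) i), hk]
      simp only [dotProduct]
      ring
    -- the lifted vectors span everything
    have hcard : Fintype.card (Fin (p + 1)) = Module.finrank ℝ (Fin (p + 1) → ℝ) := by
      simp [Module.finrank_fin_fun]
    have hspan : Submodule.span ℝ (Set.range
        (fun k : Fin (p + 1) => (Fin.cons 1 (yv (Fin.castLE hn k)) : Fin (p + 1) → ℝ))) = ⊤ := by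
      rw [← coe_basisOfLinearIndependentOfCardEqFinrank h hcard]
      exact (basisOfLinearIndependentOfCardEqFinrank h hcard).span_eq
    obtain ⟨i0, hi0⟩ := Function.ne_iff.1 hx
    let φ : (Fin (p + 1) → ℝ) →ₗ[ℝ] ℝ :=
      { toFun := fun w => u ⬝ᵥ w
        map_add' := fun a b => dotProduct_add u a b
        map_smul' := fun r a => dotProduct_smul r u a }
    have hker : Submodule.span ℝ (Set.range
        (fun k : Fin (p + 1) => (Fin.cons 1 (yv (Fin.castLE hn k)) : Fin (p + 1) → ℝ))) ≤
        LinearMap.ker φ := by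
      rw [Submodule.span_le]
      rintro w ⟨k, rfl⟩
      exact hud k
    rw [hspan] at hker
    have h0 : φ (Pi.single (Fin.succ i0) (1 : ℝ)) = 0 := hker trivial
    have : φ (Pi.single (Fin.succ i0) (1 : ℝ)) = x i0 := by
      show u ⬝ᵥ _ = x i0
      rw [dotProduct_single]
      simp [hu]
    rw [this] at h0
    exact hi0 (by simpa using h0)

lemma map_tuple_eq_pi {Ω V : Type*} [MeasurableSpace Ω] [MeasurableSpace V]
    (P : Measure Ω) [IsProbabilityMeasure P] {m : ℕ} (Z : Fin m → Ω → V)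
    (hZ : ∀ k, Measurable (Z k))
    (hprod : ∀ (s : Fin m → Set V), (∀ k, MeasurableSet (s k)) →
      P (⋂ k, Z k ⁻¹' s k) = ∏ k, P (Z k ⁻¹' s k)) :
    Measure.map (fun ω k => Z k ω) P = Measure.pi (fun k => Measure.map (Z k) P) := by
  haveI : ∀ k, IsProbabilityMeasure (Measure.map (Z k) P) :=
    fun k => Measure.isProbabilityMeasure_map (hZ k).aemeasurable
  haveI : ∀ k, SigmaFinite (Measure.map (Z k) P) := fun k => inferInstance
  refine (Measure.pi_eq fun s hs => ?_).symm
  rw [Measure.map_apply (measurable_pi_lambda _ hZ) (MeasurableSet.univ_pi hs)]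
  have hpre : (fun ω k => Z k ω) ⁻¹' Set.pi Set.univ s = ⋂ k, Z k ⁻¹' s k := by
    ext ω; simp [Set.mem_univ_pi]
  rw [hpre, hprod s hs]
  exact Finset.prod_congr rfl fun k _ => (Measure.map_apply (hZ k) (hs k)).symm

/-- if `n ≥ p+1` and `Y⁽¹⁾,…,Y⁽ⁿ⁾` are i.i.d. from a `p`-dimensional
multivariate normal distribution (given by its Lebesgue density) with positive definite
covariance `Σ`, then almost surely the sample covariance matrix
`S = (1/n) ∑ₖ (Y⁽ᵏ⁾ - Ȳ)(Y⁽ᵏ⁾ - Ȳ)'` is positive definite. -/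
theorem sample_covariance_posDef {p n : ℕ} (hn : p + 1 ≤ n)
    {Ω : Type*} [MeasurableSpace Ω] (P : Measure Ω) [IsProbabilityMeasure P]
    (μv : Fin p → ℝ) (Sig : Matrix (Fin p) (Fin p) ℝ) (hSig : Sig.PosDef)
    (Y : Fin n → Ω → (Fin p → ℝ)) (hmeas : ∀ k, Measurable (Y k))
    (hindep : iIndepFun Y P)
    (hlaw : ∀ k, Measure.map (Y k) P =
      volume.withDensity (fun x : Fin p → ℝ =>
        ENNReal.ofReal (((2 * Real.pi) ^ p * Sig.det) ^ (-(1/2 : ℝ)) *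
          Real.exp (-(1/2 : ℝ) * ((x - μv) ⬝ᵥ (Sig⁻¹ *ᵥ (x - μv))))))) :
    ∀ᵐ ω ∂P,
      (Matrix.of fun i j : Fin p =>
        (n : ℝ)⁻¹ * ∑ k : Fin n,
          (Y k ω i - ((n : ℝ)⁻¹ • ∑ m : Fin n, Y m ω) i) *
          (Y k ω j - ((n : ℝ)⁻¹ • ∑ m : Fin n, Y m ω) j)).PosDef := by
  classical
  set μ0 : Measure (Fin p → ℝ) := volume.withDensity (fun x : Fin p → ℝ =>
      ENNReal.ofReal (((2 * Real.pi) ^ p * Sig.det) ^ (-(1/2 : ℝ)) *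
        Real.exp (-(1/2 : ℝ) * ((x - μv) ⬝ᵥ (Sig⁻¹ *ᵥ (x - μv)))))) with hμ0
  set Z : Fin (p + 1) → Ω → (Fin p → ℝ) := fun k => Y (Fin.castLE hn k) with hZdef
  have hZmeas : ∀ k, Measurable (Z k) := fun k => hmeas _
  have hprod : ∀ s : Fin (p+1) → Set (Fin p → ℝ), (∀ k, MeasurableSet (s k)) →
      P (⋂ k, Z k ⁻¹' s k) = ∏ k, P (Z k ⁻¹' s k) := by
    intro s hs
    set sets : Fin n → Set (Fin p → ℝ) :=
      fun j => if h : (j : ℕ) < p + 1 then s ⟨j, h⟩ else Set.univ with hsets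
    have hsetsZ' : ∀ k : Fin (p + 1), sets (Fin.castLE hn k) = s k := by
      intro k
      simp only [hsets, Fin.coe_castLE]
      rw [dif_pos k.isLt]
    have hsets_m : ∀ j, j ∈ Finset.univ.image (Fin.castLE hn) → MeasurableSet (sets j) := by
      intro j _
      simp only [hsets]
      split
      · exact hs _
      · exact MeasurableSet.univ
    have key := hindep.measure_inter_preimage_eq_mul (Finset.univ.image (Fin.castLE hn)) hsets_m
    have hL : (⋂ i ∈ Finset.univ.image (Fin.castLE hn), Y i ⁻¹' sets i) =
        ⋂ k, Z k ⁻¹' s k := by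
      ext ω
      simp only [Set.mem_iInter, Finset.mem_image, Finset.mem_univ, true_and,
        Set.mem_preimage]
      constructor
      · intro hω k
        have := hω (Fin.castLE hn k) ⟨k, rfl⟩
        rwa [hsetsZ' k] at this
      · intro hω j hj
        obtain ⟨k, rfl⟩ := hj
        rw [hsetsZ' k]
        exact hω k
    rw [hL] at key
    rw [key, Finset.prod_image (fun k _ k' _ h => Fin.castLE_injective hn h)]
    exact Finset.prod_congr rfl fun k _ => by rw [hsetsZ' k]
  have hmap : Measure.map (fun ω k => Z k ω) P = Measure.pi (fun _ : Fin (p+1) => μ0) := by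
    rw [map_tuple_eq_pi P Z hZmeas hprod]
    congr 1
    funext k
    exact hlaw _
  haveI hμ0prob : IsProbabilityMeasure μ0 := by
    rw [← hlaw ⟨0, lt_of_lt_of_le (Nat.succ_pos p) hn⟩]
    exact Measure.isProbabilityMeasure_map (hmeas _).aemeasurable
  have hac : μ0 ≪ volume := withDensity_absolutelyContinuous _ _
  have hnull := key_null (π := p) (p + 1) le_rfl (fun _ => μ0)
    (fun _ => hμ0prob) (fun _ => hac)
  have hPE : P {ω | ¬ LinearIndependent ℝ
      (fun k : Fin (p + 1) => (Fin.cons 1 (Z k ω) : Fin (p + 1) → ℝ))} = 0 := by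
    have hpre : {ω | ¬ LinearIndependent ℝ
        (fun k : Fin (p + 1) => (Fin.cons 1 (Z k ω) : Fin (p + 1) → ℝ))} =
        (fun ω (k : Fin (p+1)) => Z k ω) ⁻¹' {y : Fin (p+1) → (Fin p → ℝ) |
          ¬ LinearIndependent ℝ (fun k => (Fin.cons 1 (y k) : Fin (p + 1) → ℝ))} := rfl
    rw [hpre, ← Measure.map_apply (measurable_pi_lambda _ hZmeas) measurableSet_badSet, hmap]
    exact hnull
  rw [ae_iff]
  refine measure_mono_null ?_ hPE
  intro ω hω
  simp only [Set.mem_ofPred_eq] at hω ⊢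
  intro hlin
  exact hω (posdef_of_linIndep hn (fun k => Y k ω) hlin)
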